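/- The Fourier coefficients of the Painlevé V weight satisfy the identity (ν+1)·( w_0(t)² − w_1(t)·w_{−1}(t) ) + t·( w_{−1}(t)² − w_{−2}(t)·w_0(t) ) − w_{−1}(t)·w_0(t) = w_0(t)²; equivalently, when w_0(t) ≠ 0, (ν+1)·(1 − w_{−1}w_1/w_0²) + t·((w_{−1}/w_0)² − w_{−2}/w_0) − w_{−1}/w_0 = 1. -/

import Mathlib

open scoped BigOperators

/-- The Fourier coefficients of the Painlevé V weight
`w(z) = z^{(μ−ν)/2} |1+z|^{μ+ν} e^{tz}` on the unit circle:
`w_k(t) = (1/2π) ∫_{−π}^{π} e^{i(μ−ν)θ/2} (2+2cos θ)^{(μ+ν)/2} e^{t e^{iθ}} e^{−ikθ} dθ`. -/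
noncomputable def wV (μ ν t : ℝ) (k : ℤ) : ℂ :=
  ((1 / (2 * Real.pi) : ℝ) : ℂ) *
    ∫ θ in (-Real.pi)..Real.pi,
      Complex.exp (Complex.I * (((μ - ν) / 2 * θ : ℝ) : ℂ)) *
        (((2 + 2 * Real.cos θ) ^ ((μ + ν) / 2) : ℝ) : ℂ) *
        Complex.exp ((t : ℂ) * Complex.exp (Complex.I * (θ : ℂ))) *
        Complex.exp (-(Complex.I * (((k : ℝ) * θ : ℝ) : ℂ)))

/-- The Toeplitz determinant `D^ε_N(t) = det[ w_{−ε+j−k}(t) ]_{0≤j,k≤N−1}`,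
with `D^ε_0(t) = 1` (the empty determinant). -/
noncomputable def toeplitzDetV (μ ν t : ℝ) (ε : ℤ) (N : ℕ) : ℂ :=
  Matrix.det (Matrix.of fun j k : Fin N => wV μ ν t (-ε + (j : ℤ) - (k : ℤ)))

/-- The reflection coefficient `r_N(t) = (−1)^N D^1_N(t)/D^0_N(t)`. -/
noncomputable def rV (μ ν t : ℝ) (N : ℕ) : ℂ :=
  (-1) ^ N * toeplitzDetV μ ν t 1 N / toeplitzDetV μ ν t 0 N

/-- The reflection coefficient `r̄_N(t) = (−1)^N D^{−1}_N(t)/D^0_N(t)`. -/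
noncomputable def rbV (μ ν t : ℝ) (N : ℕ) : ℂ :=
  (-1) ^ N * toeplitzDetV μ ν t (-1) N / toeplitzDetV μ ν t 0 N



section PVaux
open Complex Real Set intervalIntegral MeasureTheory

noncomputable def fV (μ ν t : ℝ) (k : ℤ) (θ : ℝ) : ℂ :=
  Complex.exp (Complex.I * (((μ - ν) / 2 * θ : ℝ) : ℂ)) *
    (((2 + 2 * Real.cos θ) ^ ((μ + ν) / 2) : ℝ) : ℂ) *
    Complex.exp ((t : ℂ) * Complex.exp (Complex.I * (θ : ℂ))) *
    Complex.exp (-(Complex.I * (((k : ℝ) * θ : ℝ) : ℂ)))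

lemma fV_shift (μ ν t : ℝ) (k : ℤ) (θ : ℝ) :
    fV μ ν t (k - 1) θ = Complex.exp (Complex.I * θ) * fV μ ν t k θ := by
  have h : Complex.exp (-(Complex.I * ((((k - 1 : ℤ) : ℝ) * θ : ℝ) : ℂ)))
      = Complex.exp (Complex.I * θ) * Complex.exp (-(Complex.I * (((k : ℝ) * θ : ℝ) : ℂ))) := by
    rw [← Complex.exp_add]
    congr 1
    push_cast
    ring
  simp only [fV, h]
  ring

lemma fV_norm (μ ν t : ℝ) (k : ℤ) (θ : ℝ) :
    ‖fV μ ν t k θ‖ = (2 + 2 * Real.cos θ) ^ ((μ + ν) / 2) * Real.exp (t * Real.cos θ) := by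
  have h1 : (Complex.I * (((μ - ν) / 2 * θ : ℝ) : ℂ)).re = 0 := by simp
  have h2 : ((t : ℂ) * Complex.exp (Complex.I * (θ : ℂ))).re = t * Real.cos θ := by
    rw [mul_comm Complex.I]
    simp [Complex.exp_ofReal_mul_I_re]
  have h3 : (-(Complex.I * (((k : ℝ) * θ : ℝ) : ℂ))).re = 0 := by simp
  simp only [fV, norm_mul, Complex.norm_exp, h1, h2, h3,
    Complex.norm_real, Real.norm_eq_abs, Real.exp_zero, one_mul, mul_one]
  rw [_root_.abs_of_nonneg (Real.rpow_nonneg (by nlinarith [Real.neg_one_le_cos θ]) _)]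

lemma cos_lb {θ : ℝ} (hθ : |θ| ≤ π) : (π - |θ|) / π ≤ Real.cos (θ / 2) := by
  have hπ : (0:ℝ) < π := Real.pi_pos
  have h1 : Real.cos (θ / 2) = Real.cos (|θ| / 2) := by
    have habs : |θ / 2| = |θ| / 2 := by rw [abs_div]; norm_num
    rw [← Real.cos_abs (θ / 2), habs]
  have h2 : Real.cos (|θ| / 2) = Real.sin (π / 2 - |θ| / 2) := (Real.sin_pi_div_two_sub _).symm
  have h3 : 2 / π * (π / 2 - |θ| / 2) ≤ Real.sin (π / 2 - |θ| / 2) :=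
    Real.mul_le_sin (by nlinarith [abs_nonneg θ]) (by nlinarith [abs_nonneg θ])
  have h4 : 2 / π * (π / 2 - |θ| / 2) = (π - |θ|) / π := by field_simp
  rw [h1, h2, ← h4]; exact h3

lemma two_add_cos_lb {θ : ℝ} (hθ : |θ| ≤ π) :
    4 * ((π - |θ|) / π) ^ 2 ≤ 2 + 2 * Real.cos θ := by
  have hc : Real.cos θ = 2 * Real.cos (θ / 2) ^ 2 - 1 := by
    rw [← Real.cos_two_mul (θ / 2)]; congr 1; ring
  have h1 := cos_lb hθ
  have h2 : 0 ≤ (π - |θ|) / π := div_nonneg (by linarith) Real.pi_pos.le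
  nlinarith

lemma hV_integrable {s : ℝ} (hs : -(1/2 : ℝ) < s) :
    IntervalIntegrable (fun θ : ℝ => (2 + 2 * Real.cos θ) ^ s) volume (-π) π := by
  have hπ : (0:ℝ) < π := Real.pi_pos
  have hmeas : AEStronglyMeasurable (fun θ : ℝ => (2 + 2 * Real.cos θ) ^ s)
      (volume.restrict (Set.uIoc (-π) π)) := by
    apply Measurable.aestronglyMeasurable
    measurability
  rcases le_or_gt 0 s with hs0 | hs0
  · -- bounded case
    refine IntervalIntegrable.mono_fun' (g := fun _ => (4:ℝ) ^ s)
      (intervalIntegrable_const) hmeas ?_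
    filter_upwards with θ
    have h1 : (0:ℝ) ≤ 2 + 2 * Real.cos θ := by nlinarith [Real.neg_one_le_cos θ]
    have h2 : (2 + 2 * Real.cos θ : ℝ) ≤ 4 := by nlinarith [Real.cos_le_one θ]
    simpa [Real.norm_eq_abs, _root_.abs_of_nonneg (Real.rpow_nonneg h1 s)]
      using Real.rpow_le_rpow h1 h2 hs0
  · -- singular case
    set c : ℝ := (4 / π ^ 2) ^ s with hc
    refine IntervalIntegrable.mono_fun'
      (g := fun θ => c * ((π - θ) ^ (2*s) + (π + θ) ^ (2*s))) ?_ hmeas ?_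
    · apply IntervalIntegrable.const_mul
      apply IntervalIntegrable.add
      · have h := (intervalIntegrable_rpow' (a := 0) (b := 2*π) (r := 2*s)
          (by linarith)).comp_sub_left π
        have he : (π - 2*π : ℝ) = -π := by ring
        rw [sub_zero, he] at h
        exact h.symm
      · have h := (intervalIntegrable_rpow' (a := 0) (b := 2*π) (r := 2*s)
          (by linarith)).comp_add_left π
        have he : (2*π - π : ℝ) = π := by ring
        rw [zero_sub, he] at h
        exact h
    · rw [Filter.EventuallyLE, ae_restrict_iff' measurableSet_uIoc]
      filter_upwards with θ hθ
      have hθ' : |θ| ≤ π := by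
        rw [Set.uIoc_of_le (by linarith : -π ≤ π)] at hθ
        rw [abs_le]; exact ⟨hθ.1.le, hθ.2⟩
      have hbase : (0:ℝ) ≤ 2 + 2 * Real.cos θ := by nlinarith [Real.neg_one_le_cos θ]
      have hterm1 : (0:ℝ) ≤ (π - θ) ^ (2*s) := Real.rpow_nonneg (by cases abs_le.1 hθ'; linarith) _
      have hterm2 : (0:ℝ) ≤ (π + θ) ^ (2*s) := Real.rpow_nonneg (by cases abs_le.1 hθ'; linarith) _
      rw [Real.norm_eq_abs, _root_.abs_of_nonneg (Real.rpow_nonneg hbase s)]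
      -- main bound
      rcases eq_or_lt_of_le hθ' with heq | hlt
      · -- |θ| = π : LHS = 0
        have : (2 + 2 * Real.cos θ : ℝ) = 0 := by
          have : Real.cos θ = -1 := by
            rw [← Real.cos_abs θ, heq, Real.cos_pi]
          rw [this]; ring
        rw [this, Real.zero_rpow (by linarith : s ≠ 0)]
        positivity
      · have hpos : (0:ℝ) < π - |θ| := by linarith
        have hq : (0:ℝ) < 4 * ((π - |θ|) / π) ^ 2 := by positivity
        have h1 : (2 + 2 * Real.cos θ) ^ s ≤ (4 * ((π - |θ|) / π) ^ 2) ^ s :=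
          Real.rpow_le_rpow_of_nonpos hq (two_add_cos_lb hθ') hs0.le
        have h2 : (4 * ((π - |θ|) / π) ^ 2 : ℝ) = (4 / π^2) * (π - |θ|)^2 := by
          field_simp
        have h3 : ((4 / π^2) * (π - |θ|)^2 : ℝ) ^ s = c * ((π - |θ|)^2) ^ s := by
          rw [Real.mul_rpow (by positivity) (by positivity)]
        have h4 : ((π - |θ|)^2 : ℝ) ^ s = (π - |θ|) ^ (2*s) := by
          rw [← Real.rpow_natCast (π - |θ|) 2, ← Real.rpow_mul hpos.le]
          norm_num [mul_comm]
        have h5 : (π - |θ|) ^ (2*s) ≤ (π - θ) ^ (2*s) + (π + θ) ^ (2*s) := by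
          rcases abs_cases θ with ⟨h, _⟩ | ⟨h, _⟩
          · rw [h]; linarith
          · rw [h]; rw [show π - -θ = π + θ by ring]; linarith
        calc (2 + 2 * Real.cos θ) ^ s ≤ (4 * ((π - |θ|) / π) ^ 2) ^ s := h1
          _ = c * (π - |θ|) ^ (2*s) := by rw [h2, h3, h4]
          _ ≤ c * ((π - θ) ^ (2*s) + (π + θ) ^ (2*s)) := by
              have hc0 : 0 ≤ c := Real.rpow_nonneg (by positivity) _
              nlinarith

lemma fV_integrable (μ ν t : ℝ) (hμν : -1 < μ + ν) (k : ℤ) :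
    IntervalIntegrable (fV μ ν t k) volume (-π) π := by
  have hs : -(1/2:ℝ) < (μ+ν)/2 := by linarith
  refine IntervalIntegrable.mono_fun'
    (g := fun θ => Real.exp |t| * (2+2*Real.cos θ)^((μ+ν)/2))
    ((hV_integrable hs).const_mul _) ?_ ?_
  · apply Measurable.aestronglyMeasurable
    have h1 : Continuous (fun θ : ℝ => Complex.exp (Complex.I * (((μ-ν)/2*θ : ℝ):ℂ))) := by
      fun_prop
    have h2 : Measurable (fun θ : ℝ => (2+2*Real.cos θ)^((μ+ν)/2)) := by measurability
    have h3 : Continuous (fun θ : ℝ => Complex.exp ((t:ℂ) * Complex.exp (Complex.I * (θ:ℂ)))) := by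
      fun_prop
    have h4 : Continuous (fun θ : ℝ => Complex.exp (-(Complex.I * (((k:ℝ)*θ : ℝ):ℂ)))) := by
      fun_prop
    exact ((h1.measurable.mul (Complex.measurable_ofReal.comp h2)).mul h3.measurable).mul
      h4.measurable
  · filter_upwards with θ
    rw [fV_norm]
    have h1 : Real.exp (t * Real.cos θ) ≤ Real.exp |t| := by
      apply Real.exp_le_exp.2
      calc t * Real.cos θ ≤ |t * Real.cos θ| := le_abs_self _
        _ = |t| * |Real.cos θ| := abs_mul _ _
        _ ≤ |t| * 1 := by
            exact mul_le_mul_of_nonneg_left (Real.abs_cos_le_one θ) (abs_nonneg t)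
        _ = |t| := mul_one _
    have h2 : (0:ℝ) ≤ (2 + 2*Real.cos θ)^((μ+ν)/2) :=
      Real.rpow_nonneg (by nlinarith [Real.neg_one_le_cos θ]) _
    calc (2 + 2*Real.cos θ)^((μ+ν)/2) * Real.exp (t * Real.cos θ)
        ≤ (2 + 2*Real.cos θ)^((μ+ν)/2) * Real.exp |t| := mul_le_mul_of_nonneg_left h1 h2
      _ = Real.exp |t| * (2+2*Real.cos θ)^((μ+ν)/2) := mul_comm _ _

lemma hasDerivAt_cexp_linear (c : ℂ) (θ : ℝ) :
    HasDerivAt (fun x : ℝ => Complex.exp (c * x)) (c * Complex.exp (c * θ)) θ := by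
  have h1 : HasDerivAt (fun x : ℝ => (x : ℂ)) 1 θ := by
    simpa using (hasDerivAt_id θ).ofReal_comp
  have h3 := (h1.const_mul c).cexp
  simpa [mul_comm] using h3

lemma fV_eq (μ ν t : ℝ) (k : ℤ) (θ : ℝ) :
    fV μ ν t k θ = Complex.exp ((Complex.I * (((μ:ℂ) - (ν:ℂ)) / 2 - (k:ℂ))) * θ) *
      (((2 + 2 * Real.cos θ) ^ ((μ + ν) / 2) : ℝ) : ℂ) *
      Complex.exp ((t : ℂ) * Complex.exp (Complex.I * θ)) := by
  have h : Complex.exp (Complex.I * (((μ - ν) / 2 * θ : ℝ) : ℂ)) *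
      Complex.exp (-(Complex.I * (((k : ℝ) * θ : ℝ) : ℂ)))
      = Complex.exp ((Complex.I * (((μ:ℂ) - (ν:ℂ)) / 2 - (k:ℂ))) * θ) := by
    rw [← Complex.exp_add]
    congr 1
    push_cast
    ring
  rw [← h]
  simp only [fV]
  ring

lemma z_eq (θ : ℝ) : Complex.exp (Complex.I * θ) =
    (Real.cos θ : ℂ) + (Real.sin θ : ℂ) * Complex.I := by
  rw [mul_comm, Complex.exp_mul_I, ← Complex.ofReal_cos, ← Complex.ofReal_sin]

lemma key_id (θ : ℝ) :
    (1 + Complex.exp (Complex.I * θ)) * (((-2) * Real.sin θ : ℝ) : ℂ)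
      = Complex.I * (Complex.exp (Complex.I * θ) - 1) * ((2 + 2 * Real.cos θ : ℝ) : ℂ) := by
  have hp : (Complex.sin θ)^2 + (Complex.cos θ)^2 = 1 := Complex.sin_sq_add_cos_sq _
  rw [z_eq]
  push_cast
  linear_combination (-2*Complex.I) * hp -
    (2*Complex.sin (θ:ℂ) + 2*Complex.cos (θ:ℂ)*Complex.sin (θ:ℂ)) * Complex.I_sq

lemma hasDerivAt_GV (μ ν t : ℝ) (k : ℤ) {θ : ℝ} (hθ : θ ∈ Set.Ioo (-π) π) :
    HasDerivAt (fun x : ℝ => (1 + Complex.exp (Complex.I * x)) * fV μ ν t k x)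
      (Complex.I * ((-(ν:ℂ) - (k:ℂ)) * fV μ ν t k θ
        + ((μ:ℂ) + 1 + (t:ℂ) - (k:ℂ)) * fV μ ν t (k-1) θ
        + (t:ℂ) * fV μ ν t (k-2) θ)) θ := by
  set s : ℝ := (μ + ν) / 2 with hs
  set b : ℂ := Complex.I * (((μ:ℂ) - (ν:ℂ)) / 2 - (k:ℂ)) with hb
  set z : ℂ := Complex.exp (Complex.I * (θ:ℂ)) with hz
  have hθabs : |θ| < π := abs_lt.2 ⟨hθ.1, hθ.2⟩
  have hc : (0:ℝ) < 2 + 2 * Real.cos θ := by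
    have h1 : Real.cos π < Real.cos |θ| :=
      Real.cos_lt_cos_of_nonneg_of_le_pi (abs_nonneg θ) le_rfl hθabs
    rw [Real.cos_abs, Real.cos_pi] at h1
    linarith
  have h1 : HasDerivAt (fun x : ℝ => 1 + Complex.exp (Complex.I * x))
      (Complex.I * z) θ := by
    have := hasDerivAt_cexp_linear Complex.I θ
    rw [← hz] at this
    simpa using this.const_add 1
  have h2 : HasDerivAt (fun x : ℝ => Complex.exp (b * x)) (b * Complex.exp (b * θ)) θ :=
    hasDerivAt_cexp_linear b θ
  have h3r : HasDerivAt (fun x : ℝ => (2 + 2 * Real.cos x) ^ s)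
      (s * (2 + 2 * Real.cos θ) ^ (s - 1) * (2 * (-Real.sin θ))) θ := by
    have hbase : HasDerivAt (fun x : ℝ => 2 + 2 * Real.cos x) (2 * (-Real.sin θ)) θ :=
      ((Real.hasDerivAt_cos θ).const_mul 2).const_add 2
    have hpow : HasDerivAt (fun y : ℝ => y ^ s) (s * (2 + 2 * Real.cos θ) ^ (s - 1))
        (2 + 2 * Real.cos θ) := Real.hasDerivAt_rpow_const (Or.inl hc.ne')
    exact hpow.comp θ hbase
  have h3 : HasDerivAt (fun x : ℝ => (((2 + 2 * Real.cos x) ^ s : ℝ) : ℂ))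
      (((s * (2 + 2 * Real.cos θ) ^ (s - 1) * (2 * (-Real.sin θ)) : ℝ) : ℂ)) θ :=
    h3r.ofReal_comp
  have h4 : HasDerivAt (fun x : ℝ => Complex.exp ((t : ℂ) * Complex.exp (Complex.I * x)))
      (Complex.exp ((t : ℂ) * z) * ((t : ℂ) * (Complex.I * z))) θ := by
    have := ((hasDerivAt_cexp_linear Complex.I θ).const_mul (t : ℂ)).cexp
    rw [← hz] at this
    exact this
  have hG := h1.mul ((h2.mul h3).mul h4)
  have hfun : (fun x : ℝ => (1 + Complex.exp (Complex.I * x)) * fV μ ν t k x)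
      = fun x : ℝ => (1 + Complex.exp (Complex.I * x)) *
        ((Complex.exp (b * x) * (((2 + 2 * Real.cos x) ^ s : ℝ) : ℂ)) *
          Complex.exp ((t : ℂ) * Complex.exp (Complex.I * x))) := by
    funext x
    rw [fV_eq]
  rw [hfun]
  refine hG.congr_deriv ?_; symm; simp only [Pi.mul_apply]
  have hzero : ((2 + 2 * Real.cos θ : ℝ) : ℂ) ≠ 0 := by
    exact_mod_cast hc.ne'
  have hC' : (((2 + 2 * Real.cos θ) ^ s : ℝ) : ℂ)
      = (((2 + 2 * Real.cos θ) ^ (s - 1) : ℝ) : ℂ) * ((2 + 2 * Real.cos θ : ℝ) : ℂ) := by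
    rw [← Complex.ofReal_mul]
    congr 1
    rw [Real.rpow_sub_one hc.ne', div_mul_cancel₀ _ hc.ne']
  have hw : ((2 * (-Real.sin θ) : ℝ) : ℂ) = (((-2) * Real.sin θ : ℝ) : ℂ) := by
    norm_num
  have hkey2 : (1 + z) * (((s * (2 + 2 * Real.cos θ) ^ (s - 1) * (2 * (-Real.sin θ)) : ℝ) : ℂ))
      = Complex.I * (s:ℂ) * (z - 1) * (((2 + 2 * Real.cos θ) ^ s : ℝ) : ℂ) := by
    have hk := key_id θ
    rw [← hz] at hk
    rw [Complex.ofReal_mul, Complex.ofReal_mul, hC']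
    linear_combination ((s:ℂ) * (((2 + 2 * Real.cos θ) ^ (s-1) : ℝ) : ℂ)) * hk +
      ((1+z) * (s:ℂ) * (((2 + 2 * Real.cos θ) ^ (s-1) : ℝ) : ℂ)) * hw
  have hs' : (s:ℂ) = ((μ:ℂ)+(ν:ℂ))/2 := by rw [hs]; push_cast; ring
  rw [hs'] at hkey2
  have hsh1 : fV μ ν t (k-1) θ = z * fV μ ν t k θ := by
    rw [hz]; exact fV_shift μ ν t k θ
  have hsh2 : fV μ ν t (k-2) θ = z * fV μ ν t (k-1) θ := by
    rw [hz]
    have := fV_shift μ ν t (k-1) θ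
    simpa [sub_sub] using this
  rw [hsh2, hsh1, fV_eq μ ν t k θ, ← hs, ← hz, ← hb]
  linear_combination (-(Complex.exp (b*(θ:ℂ)) * Complex.exp ((t:ℂ)*z))) * hkey2

lemma norm_one_add_z (θ : ℝ) :
    ‖1 + Complex.exp (Complex.I * θ)‖ = Real.sqrt (2 + 2 * Real.cos θ) := by
  rw [z_eq]
  have h : (1:ℂ) + ((Real.cos θ:ℂ) + (Real.sin θ:ℂ) * Complex.I)
      = ((1 + Real.cos θ : ℝ):ℂ) + ((Real.sin θ : ℝ):ℂ) * Complex.I := by push_cast; ring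
  rw [h, Complex.norm_def, Complex.normSq_add_mul_I]
  congr 1
  nlinarith [Real.sin_sq_add_cos_sq θ]

lemma G_bound (μ ν t : ℝ) (hμν : -1 < μ + ν) (k : ℤ) (θ : ℝ) :
    ‖(1 + Complex.exp (Complex.I * θ)) * fV μ ν t k θ‖
      ≤ Real.exp |t| * (2 + 2 * Real.cos θ) ^ ((μ + ν) / 2 + 1/2) := by
  have hb : (0:ℝ) ≤ 2 + 2 * Real.cos θ := by nlinarith [Real.neg_one_le_cos θ]
  have hp : ((μ + ν) / 2 + 1/2 : ℝ) ≠ 0 := by linarith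
  rw [norm_mul, fV_norm, norm_one_add_z, Real.sqrt_eq_rpow, Real.rpow_add' hb hp]
  have h1 : Real.exp (t * Real.cos θ) ≤ Real.exp |t| := by
    apply Real.exp_le_exp.2
    calc t * Real.cos θ ≤ |t * Real.cos θ| := le_abs_self _
      _ = |t| * |Real.cos θ| := abs_mul _ _
      _ ≤ |t| * 1 := mul_le_mul_of_nonneg_left (Real.abs_cos_le_one θ) (abs_nonneg t)
      _ = |t| := mul_one _
  have q1 : (0:ℝ) ≤ (2 + 2 * Real.cos θ) ^ (1/2 : ℝ) := Real.rpow_nonneg hb _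
  have q2 : (0:ℝ) ≤ (2 + 2 * Real.cos θ) ^ ((μ + ν)/2 : ℝ) := Real.rpow_nonneg hb _
  calc (2 + 2 * Real.cos θ) ^ (1/2 : ℝ) *
        ((2 + 2 * Real.cos θ) ^ ((μ + ν)/2 : ℝ) * Real.exp (t * Real.cos θ))
      = ((2 + 2 * Real.cos θ) ^ ((μ + ν)/2 : ℝ) * (2 + 2 * Real.cos θ) ^ (1/2 : ℝ))
          * Real.exp (t * Real.cos θ) := by ring
    _ ≤ ((2 + 2 * Real.cos θ) ^ ((μ + ν)/2 : ℝ) * (2 + 2 * Real.cos θ) ^ (1/2 : ℝ))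
          * Real.exp |t| := mul_le_mul_of_nonneg_left h1 (mul_nonneg q2 q1)
    _ = Real.exp |t| * ((2 + 2 * Real.cos θ) ^ ((μ + ν)/2 : ℝ)
          * (2 + 2 * Real.cos θ) ^ (1/2 : ℝ)) := by ring

lemma G_endpoints (μ ν t : ℝ) (k : ℤ) {x : ℝ} (hx : x = π ∨ x = -π) :
    (1 + Complex.exp (Complex.I * x)) * fV μ ν t k x = 0 := by
  have h : Complex.exp (Complex.I * x) = -1 := by
    rcases hx with h | h <;> rw [h]
    · rw [mul_comm]; exact_mod_cast Complex.exp_pi_mul_I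
    · push_cast
      rw [mul_comm, neg_mul, Complex.exp_neg, Complex.exp_pi_mul_I]
      norm_num
  rw [h]
  ring

lemma contG (μ ν t : ℝ) (hμν : -1 < μ + ν) (k : ℤ) :
    ContinuousOn (fun x : ℝ => (1 + Complex.exp (Complex.I * x)) * fV μ ν t k x)
      (Icc (-π) π) := by
  intro x hx
  by_cases hx' : x ∈ Ioo (-π) π
  · exact (hasDerivAt_GV μ ν t k hx').continuousAt.continuousWithinAt
  · have hend : x = π ∨ x = -π := by
      rcases hx with ⟨h1, h2⟩
      rcases eq_or_lt_of_le h1 with he | hlt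
      · right; exact he.symm
      rcases eq_or_lt_of_le h2 with he | hlt2
      · left; exact he
      exact absurd ⟨hlt, hlt2⟩ hx'
    have h0 : (1 + Complex.exp (Complex.I * x)) * fV μ ν t k x = 0 := G_endpoints μ ν t k hend
    unfold ContinuousWithinAt
    rw [show ((fun x : ℝ => (1 + Complex.exp (Complex.I * x)) * fV μ ν t k x) x) = 0 from h0]
    have hcosx : Real.cos x = -1 := by
      rcases hend with h | h <;> rw [h] <;> simp [Real.cos_pi]
    have hpos : (0:ℝ) < (μ + ν) / 2 + 1/2 := by linarith
    have htb : Filter.Tendsto (fun y : ℝ => Real.exp |t| * (2 + 2 * Real.cos y) ^ ((μ + ν) / 2 + 1/2))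
        (nhds x) (nhds 0) := by
      have h1 : Filter.Tendsto (fun y : ℝ => 2 + 2 * Real.cos y) (nhds x) (nhds 0) := by
        have := (Real.continuous_cos.tendsto x).const_mul (2:ℝ)
        have h2 := this.const_add (2:ℝ)
        rw [hcosx] at h2
        convert h2 using 2
        norm_num
      have h2 : Filter.Tendsto (fun u : ℝ => u ^ ((μ + ν) / 2 + 1/2)) (nhds 0) (nhds 0) := by
        have := (Real.continuousAt_rpow_const 0 ((μ + ν) / 2 + 1/2) (Or.inr hpos.le))
        unfold ContinuousAt at this
        rwa [show ((fun u : ℝ => u ^ ((μ + ν) / 2 + 1/2)) 0) = 0 from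
          Real.zero_rpow hpos.ne'] at this
      have := (h2.comp h1).const_mul (Real.exp |t|)
      simpa using this
    exact squeeze_zero_norm (fun y => G_bound μ ν t hμν k y) (htb.mono_left nhdsWithin_le_nhds)

lemma recV (μ ν t : ℝ) (hμν : -1 < μ + ν) (k : ℤ) :
    (-(ν:ℂ) - (k:ℂ)) * wV μ ν t k + ((μ:ℂ) + 1 + (t:ℂ) - (k:ℂ)) * wV μ ν t (k-1)
      + (t:ℂ) * wV μ ν t (k-2) = 0 := by
  have hle : -π ≤ π := by linarith [Real.pi_pos]
  have hik := fV_integrable μ ν t hμν k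
  have hik1 := fV_integrable μ ν t hμν (k-1)
  have hik2 := fV_integrable μ ν t hμν (k-2)
  set c1 : ℂ := -(ν:ℂ) - (k:ℂ) with hc1
  set c2 : ℂ := (μ:ℂ) + 1 + (t:ℂ) - (k:ℂ) with hc2
  have hintg : IntervalIntegrable
      (fun x => Complex.I * (c1 * fV μ ν t k x + c2 * fV μ ν t (k-1) x + (t:ℂ) * fV μ ν t (k-2) x))
      volume (-π) π :=
    (((hik.const_mul c1).add (hik1.const_mul c2)).add (hik2.const_mul (t:ℂ))).const_mul Complex.I
  have hftc : (∫ x in (-π)..π,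
      Complex.I * (c1 * fV μ ν t k x + c2 * fV μ ν t (k-1) x + (t:ℂ) * fV μ ν t (k-2) x))
      = (1 + Complex.exp (Complex.I * (π:ℝ))) * fV μ ν t k π
        - (1 + Complex.exp (Complex.I * (-π:ℝ))) * fV μ ν t k (-π) := by
    exact integral_eq_sub_of_hasDeriv_right_of_le hle (contG μ ν t hμν k)
      (fun x hx => (hasDerivAt_GV μ ν t k hx).hasDerivWithinAt) hintg
  rw [G_endpoints μ ν t k (Or.inl rfl), G_endpoints μ ν t k (Or.inr rfl), sub_zero] at hftc
  rw [intervalIntegral.integral_const_mul] at hftc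
  have hI : (Complex.I : ℂ) ≠ 0 := Complex.I_ne_zero
  have hsum : (∫ x in (-π)..π,
      (c1 * fV μ ν t k x + c2 * fV μ ν t (k-1) x + (t:ℂ) * fV μ ν t (k-2) x)) = 0 := by
    rcases mul_eq_zero.1 hftc with h | h
    · exact absurd h hI
    · exact h
  rw [intervalIntegral.integral_add ((hik.const_mul c1).add (hik1.const_mul c2))
      (hik2.const_mul (t:ℂ)),
    intervalIntegral.integral_add (hik.const_mul c1) (hik1.const_mul c2),
    intervalIntegral.integral_const_mul, intervalIntegral.integral_const_mul,
    intervalIntegral.integral_const_mul] at hsum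
  have hw : ∀ j : ℤ, wV μ ν t j = ((1 / (2 * Real.pi) : ℝ) : ℂ) * ∫ θ in (-π)..π, fV μ ν t j θ :=
    fun j => rfl
  rw [hw k, hw (k-1), hw (k-2)]
  linear_combination ((1 / (2 * Real.pi) : ℝ) : ℂ) * hsum

lemma div_identity (a b c d t ν : ℂ) (h0 : a ≠ 0)
    (hmain : (ν+1)*(a^2 - d*b) + t*(b^2 - c*a) - b*a = a^2) :
    (ν+1)*(1 - b*d/a^2) + t*((b/a)^2 - c/a) - b/a = 1 := by
  field_simp
  linear_combination hmain

end PVaux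

theorem stmt8 (t μ ν : ℝ) (hμν : -1 < μ + ν) :
    ((ν : ℂ) + 1) * ((wV μ ν t 0) ^ 2 - wV μ ν t 1 * wV μ ν t (-1))
      + (t : ℂ) * ((wV μ ν t (-1)) ^ 2 - wV μ ν t (-2) * wV μ ν t 0)
      - wV μ ν t (-1) * wV μ ν t 0 = (wV μ ν t 0) ^ 2
    ∧ (wV μ ν t 0 ≠ 0 →
        ((ν : ℂ) + 1) * (1 - wV μ ν t (-1) * wV μ ν t 1 / (wV μ ν t 0) ^ 2)
          + (t : ℂ) * ((wV μ ν t (-1) / wV μ ν t 0) ^ 2 - wV μ ν t (-2) / wV μ ν t 0)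
          - wV μ ν t (-1) / wV μ ν t 0 = 1) := by
  have r0 := recV μ ν t hμν 0
  have r1 := recV μ ν t hμν 1
  norm_num at r0 r1
  constructor
  · linear_combination (wV μ ν t (-1)) * r1 - (wV μ ν t 0) * r0
  · intro h0
    have hmain : ((ν : ℂ) + 1) * ((wV μ ν t 0) ^ 2 - wV μ ν t 1 * wV μ ν t (-1))
        + (t : ℂ) * ((wV μ ν t (-1)) ^ 2 - wV μ ν t (-2) * wV μ ν t 0)
        - wV μ ν t (-1) * wV μ ν t 0 = (wV μ ν t 0) ^ 2 := by
      linear_combination (wV μ ν t (-1)) * r1 - (wV μ ν t 0) * r0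
    exact div_identity (wV μ ν t 0) (wV μ ν t (-1)) (wV μ ν t (-2)) (wV μ ν t 1) t ν h0 hmain
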